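/- For a triangle T with vertices P₁, P₂, P₃ and a linear function B on T, the boundary integral identity ∮_{∂T} ½ B² n dl = |T| B̄ ∇B holds componentwise, where B̄ is the average of B over T and n is the outward unit normal; equivalently, the divergence theorem applied to ½B² gives ∮ ½B² n dl = ∫_T B ∇B dA = |T| B̄ ∇B since ∇B is constant. -/

import Mathlib

open MeasureTheory Set

/-- Boundary integral of `½B²` on an edge of a polygon: the contribution of the edge
from `P` to `Q` (traversed counterclockwise), as a vector `∫ ½B² n dl`, where
`n dl = (dy, −dx)`. -/
noncomputable def edgeInt9 (B : ℝ × ℝ → ℝ) (P Q : ℝ × ℝ) : ℝ × ℝ :=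
  (∫ s in (0:ℝ)..1, (1 / 2) * (B (P + s • (Q - P))) ^ 2) • (Q.2 - P.2, -(Q.1 - P.1))


lemma quadInt (c0 c1 c2 x : ℝ) :
    ∫ s in (0:ℝ)..x, (c0 + c1 * s + c2 * s ^ 2) = c0 * x + c1 * x ^ 2 / 2 + c2 * x ^ 3 / 3 := by
  have h : ∀ s ∈ Set.uIcc (0:ℝ) x, HasDerivAt (fun t => c0 * t + c1 * t ^ 2 / 2 + c2 * t ^ 3 / 3)
      (c0 + c1 * s + c2 * s ^ 2) s := by
    intro s _
    have h1 : HasDerivAt (fun t : ℝ => c0 * t + c1 * t ^ 2 / 2 + c2 * t ^ 3 / 3)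
        (c0 * 1 + c1 * (2 * s ^ 1) / 2 + c2 * (3 * s ^ 2) / 3) s := by
      exact (((hasDerivAt_id s).const_mul c0).add (((hasDerivAt_pow 2 s).const_mul c1).div_const 2)).add
        (((hasDerivAt_pow 3 s).const_mul c2).div_const 3)
    convert h1 using 1; ring
  rw [intervalIntegral.integral_eq_sub_of_hasDerivAt h (by apply Continuous.intervalIntegrable; continuity)]
  ring


def S9 : Set (ℝ × ℝ) := {p | 0 ≤ p.1 ∧ 0 ≤ p.2 ∧ p.1 + p.2 ≤ 1}

lemma S9_convex : Convex ℝ S9 := by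
  intro x hx y hy s t hs ht hst
  obtain ⟨hx1, hx2, hx3⟩ := hx
  obtain ⟨hy1, hy2, hy3⟩ := hy
  refine ⟨?_, ?_, ?_⟩ <;>
    simp only [Prod.fst_add, Prod.snd_add, Prod.smul_fst, Prod.smul_snd, smul_eq_mul] <;>
    nlinarith

lemma hull_eq9 : convexHull ℝ ({(0,0), (1,0), (0,1)} : Set (ℝ × ℝ)) = S9 := by
  apply le_antisymm
  · apply convexHull_min _ S9_convex
    rintro p (rfl | rfl | rfl) <;> constructor <;> norm_num
  · rintro ⟨x, y⟩ ⟨hx, hy, hxy⟩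
    simp only [mem_setOf_eq] at hx hy hxy
    set H := convexHull ℝ ({(0,0), (1,0), (0,1)} : Set (ℝ × ℝ)) with hH
    have h0 : ((0:ℝ),(0:ℝ)) ∈ H := subset_convexHull ℝ _ (by simp)
    have h1 : ((1:ℝ),(0:ℝ)) ∈ H := subset_convexHull ℝ _ (by simp)
    have h2 : ((0:ℝ),(1:ℝ)) ∈ H := subset_convexHull ℝ _ (by simp)
    have hc : Convex ℝ H := convex_convexHull ℝ _
    rcases eq_or_lt_of_le (by linarith : (0:ℝ) ≤ x + y) with h | h
    · have hx0 : x = 0 := by linarith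
      have hy0 : y = 0 := by linarith
      rw [hx0, hy0]; exact h0
    · set t := x + y with ht
      have hq : ((x/t, y/t) : ℝ × ℝ) ∈ H := by
        have := hc h1 h2 (by positivity) (by positivity)
          (by field_simp; exact ht.symm : x/t + y/t = 1)
        simpa [Prod.ext_iff] using this
      have := hc h0 hq (by linarith : (0:ℝ) ≤ 1 - t) (le_of_lt h) (by ring)
      have heq : ((1 - t) • ((0:ℝ),(0:ℝ)) + t • ((x/t, y/t) : ℝ × ℝ)) = (x, y) := by
        have ht0 : t ≠ 0 := ne_of_gt h
        simp [Prod.ext_iff, smul_eq_mul]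
        constructor <;> field_simp
      rwa [heq] at this

lemma S9_isClosed : IsClosed S9 := by
  have : S9 = {p : ℝ × ℝ | 0 ≤ p.1} ∩ {p | 0 ≤ p.2} ∩ {p | p.1 + p.2 ≤ 1} := by
    ext p; simp [S9]; tauto
  rw [this]
  exact ((isClosed_le continuous_const continuous_fst).inter
    (isClosed_le continuous_const continuous_snd)).inter
    (isClosed_le (continuous_fst.add continuous_snd) continuous_const)

lemma S9_measurable : MeasurableSet S9 := S9_isClosed.measurableSet

lemma S9_isCompact : IsCompact S9 := by
  apply IsCompact.of_isClosed_subset (isCompact_Icc (a := ((0:ℝ),(0:ℝ))) (b := ((1:ℝ),(1:ℝ)))) S9_isClosed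
  rintro ⟨x, y⟩ ⟨hx, hy, hxy⟩
  simp only [mem_setOf_eq] at hx hy hxy
  constructor <;> constructor <;> simp <;> linarith

lemma integral_S9 (c d e : ℝ) :
    ∫ p in S9, (c + d * p.1 + e * p.2) = c / 2 + d / 6 + e / 6 := by
  set f : ℝ × ℝ → ℝ := fun p => c + d * p.1 + e * p.2 with hf
  have hfc : Continuous f := by fun_prop
  have hint : IntegrableOn f S9 (volume : Measure (ℝ × ℝ)) :=
    hfc.continuousOn.integrableOn_compact S9_isCompact
  have h1 : ∫ p in S9, f p = ∫ p, S9.indicator f p := (integral_indicator S9_measurable).symm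
  have hind : Integrable (S9.indicator f) (volume : Measure (ℝ × ℝ)) :=
    (integrable_indicator_iff S9_measurable).mpr hint
  rw [h1]
  rw [Measure.volume_eq_prod ℝ ℝ]
  rw [integral_prod _ (by rwa [← Measure.volume_eq_prod ℝ ℝ])]
  have inner : ∀ x : ℝ, (∫ y, S9.indicator f (x, y)) =
      (Icc (0:ℝ) 1).indicator (fun x => (c + d * x) * (1 - x) + e * (1 - x) ^ 2 / 2) x := by
    intro x
    by_cases hx : x ∈ Icc (0:ℝ) 1
    · obtain ⟨hx0, hx1⟩ := hx
      have hset : (fun y => S9.indicator f (x, y)) = (Icc (0:ℝ) (1 - x)).indicator (fun y => f (x, y)) := by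
        funext y
        by_cases hy : y ∈ Icc (0:ℝ) (1 - x)
        · obtain ⟨hy0, hy1⟩ := hy
          have hm1 : ((x,y) : ℝ × ℝ) ∈ S9 := ⟨hx0, hy0, by simp only; linarith⟩
          have hm2 : y ∈ Icc (0:ℝ) (1 - x) := ⟨hy0, hy1⟩
          rw [indicator_of_mem hm1, indicator_of_mem hm2]
        · have hm1 : ((x,y) : ℝ × ℝ) ∉ S9 := by
            rintro ⟨-, h2, h3⟩
            exact hy ⟨h2, by simp only at h3; linarith⟩
          rw [indicator_of_notMem hm1, indicator_of_notMem hy]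
      have hmx : x ∈ Icc (0:ℝ) 1 := ⟨hx0, hx1⟩
      rw [hset, indicator_of_mem hmx, integral_indicator measurableSet_Icc,
        integral_Icc_eq_integral_Ioc, ← intervalIntegral.integral_of_le (by linarith)]
      have : ∫ y in (0:ℝ)..(1 - x), f (x, y) = ∫ y in (0:ℝ)..(1 - x), ((c + d * x) + e * y + 0 * y ^ 2) := by
        congr 1; funext y; simp only [f]; ring
      rw [this, quadInt]
      ring
    · rw [indicator_of_notMem hx]
      have hset : (fun y => S9.indicator f (x, y)) = fun _ => (0:ℝ) := by
        funext y
        apply indicator_of_notMem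
        rintro ⟨h1, h2, h3⟩
        simp only [mem_setOf_eq] at h1 h2 h3
        simp only [mem_Icc, not_and_or, not_le] at hx
        rcases hx with h | h
        · exact absurd h1 (not_le.mpr h)
        · linarith
      rw [hset, integral_zero]
  simp_rw [inner]
  rw [integral_indicator measurableSet_Icc, integral_Icc_eq_integral_Ioc,
    ← intervalIntegral.integral_of_le (by norm_num : (0:ℝ) ≤ 1)]
  have : ∫ x in (0:ℝ)..1, ((c + d * x) * (1 - x) + e * (1 - x) ^ 2 / 2) =
      ∫ x in (0:ℝ)..1, ((c + e / 2) + (d - c - e) * x + (e / 2 - d) * x ^ 2) := by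
    congr 1; funext x; ring
  rw [this, quadInt]
  ring

noncomputable def M9 (P1 P2 P3 : ℝ × ℝ) : (ℝ × ℝ) →L[ℝ] (ℝ × ℝ) :=
  LinearMap.toContinuousLinearMap
  { toFun := fun p => (p.1 * (P2.1 - P1.1) + p.2 * (P3.1 - P1.1),
                       p.1 * (P2.2 - P1.2) + p.2 * (P3.2 - P1.2))
    map_add' := by intro p q; simp only [Prod.ext_iff, Prod.fst_add, Prod.snd_add]
                   constructor <;> ring
    map_smul' := by intro c p; simp only [Prod.ext_iff, Prod.smul_fst, Prod.smul_snd,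
                      smul_eq_mul, RingHom.id_apply]
                    constructor <;> ring }

lemma M9_apply (P1 P2 P3 : ℝ × ℝ) (p : ℝ × ℝ) :
    M9 P1 P2 P3 p = (p.1 * (P2.1 - P1.1) + p.2 * (P3.1 - P1.1),
                     p.1 * (P2.2 - P1.2) + p.2 * (P3.2 - P1.2)) := rfl

lemma M9_det (P1 P2 P3 : ℝ × ℝ) :
    (M9 P1 P2 P3).det =
      (P2.1 - P1.1) * (P3.2 - P1.2) - (P3.1 - P1.1) * (P2.2 - P1.2) := by
  have h : (M9 P1 P2 P3).det = LinearMap.det ((M9 P1 P2 P3) : (ℝ × ℝ) →ₗ[ℝ] (ℝ × ℝ)) := rfl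
  rw [h, ← LinearMap.det_toMatrix (Module.Basis.finTwoProd ℝ), Matrix.det_fin_two]
  simp [LinearMap.toMatrix_apply, Module.Basis.coe_finTwoProd_repr, M9_apply]


noncomputable def L9 (P1 P2 P3 : ℝ × ℝ) : (ℝ × ℝ) →ᵃ[ℝ] (ℝ × ℝ) :=
  { toFun := fun p => P1 + M9 P1 P2 P3 p
    linear := (M9 P1 P2 P3).toLinearMap
    map_vadd' := by
      intro p v
      simp only [ContinuousLinearMap.coe_coe, vadd_eq_add, map_add]
      abel }

lemma triangle_integral (P1 P2 P3 : ℝ × ℝ) (a : ℝ) (g : ℝ × ℝ)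
    (B : ℝ × ℝ → ℝ) (hB : ∀ x, B x = a + g.1 * x.1 + g.2 * x.2)
    (A : ℝ)
    (hA : A = (1 / 2) * ((P2.1 - P1.1) * (P3.2 - P1.2) - (P3.1 - P1.1) * (P2.2 - P1.2)))
    (hApos : 0 < A) :
    ∫ x in convexHull ℝ ({P1, P2, P3} : Set (ℝ × ℝ)), B x
      = A * (B P1 + B P2 + B P3) / 3 := by
  set L := L9 P1 P2 P3 with hLdef
  have hLapp : ∀ p : ℝ × ℝ, L p = (P1.1 + p.1 * (P2.1 - P1.1) + p.2 * (P3.1 - P1.1),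
      P1.2 + p.1 * (P2.2 - P1.2) + p.2 * (P3.2 - P1.2)) := by
    intro p
    show P1 + M9 P1 P2 P3 p = _
    rw [M9_apply]
    simp [Prod.ext_iff]
    constructor <;> ring
  have himg : convexHull ℝ ({P1, P2, P3} : Set (ℝ × ℝ)) = L '' S9 := by
    have h1 : L '' ({(0,0), (1,0), (0,1)} : Set (ℝ × ℝ)) = {P1, P2, P3} := by
      rw [Set.image_insert_eq, Set.image_insert_eq, Set.image_singleton]
      rw [hLapp, hLapp, hLapp]
      norm_num
    rw [← h1, ← AffineMap.image_convexHull, hull_eq9]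
  have hdet : (M9 P1 P2 P3).det = 2 * A := by rw [M9_det, hA]; ring
  have hinj : Set.InjOn L S9 := by
    intro p _ q _ h
    rw [hLapp, hLapp, Prod.ext_iff] at h
    obtain ⟨h1, h2⟩ := h
    simp only at h1 h2
    have e1 : (p.1 - q.1) * (2 * A) = 0 := by
      rw [hA]; linear_combination (P3.2 - P1.2) * h1 - (P3.1 - P1.1) * h2
    have e2 : (p.2 - q.2) * (2 * A) = 0 := by
      rw [hA]; linear_combination (P2.1 - P1.1) * h2 - (P2.2 - P1.2) * h1
    have hA0 : (2 * A) ≠ 0 := by positivity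
    have : p.1 = q.1 := by
      rcases mul_eq_zero.mp e1 with h | h
      · linarith
      · exact absurd h hA0
    have : p.2 = q.2 := by
      rcases mul_eq_zero.mp e2 with h | h
      · linarith
      · exact absurd h hA0
    exact Prod.ext ‹p.1 = q.1› ‹p.2 = q.2›
  have hfd : ∀ p ∈ S9, HasFDerivWithinAt L ((fun _ : ℝ × ℝ => M9 P1 P2 P3) p) S9 p := by
    intro p _
    have : HasFDerivAt L (M9 P1 P2 P3) p := by
      have h := (M9 P1 P2 P3).hasFDerivAt (x := p)
      exact h.const_add P1
    exact this.hasFDerivWithinAt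
  rw [himg,
    integral_image_eq_integral_abs_det_fderiv_smul volume S9_measurable hfd hinj B]
  simp only [hdet, smul_eq_mul]
  have habs : |2 * A| = 2 * A := abs_of_pos (by linarith)
  simp_rw [habs]
  rw [MeasureTheory.integral_const_mul]
  have hcomp : ∀ p : ℝ × ℝ, B (L p) =
      B P1 + (B P2 - B P1) * p.1 + (B P3 - B P1) * p.2 := by
    intro p
    rw [hLapp]
    simp only [hB]
    ring
  simp_rw [hcomp]
  rw [integral_S9]
  ring

lemma edge_eval9 (a : ℝ) (g : ℝ × ℝ) (B : ℝ × ℝ → ℝ)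
    (hB : ∀ x, B x = a + g.1 * x.1 + g.2 * x.2) (P Q : ℝ × ℝ) :
    edgeInt9 B P Q = ((B P ^ 2 + B P * B Q + B Q ^ 2) / 6) • (Q.2 - P.2, -(Q.1 - P.1)) := by
  unfold edgeInt9
  congr 1
  have h : ∀ s : ℝ, (1 / 2) * (B (P + s • (Q - P))) ^ 2 =
      (1 / 2) * (B P) ^ 2 + (B P * (B Q - B P)) * s + ((1 / 2) * (B Q - B P) ^ 2) * s ^ 2 := by
    intro s
    simp only [hB, Prod.fst_add, Prod.snd_add, Prod.smul_fst, Prod.smul_snd,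
      Prod.fst_sub, Prod.snd_sub, smul_eq_mul]
    ring
  simp_rw [h]
  rw [quadInt]
  ring

/-- For a nondegenerate (counterclockwise) triangle `T = conv{P₁,P₂,P₃}` and an affine
function `B(x) = a + g·x`, the boundary integral identity
`∮_{∂T} ½ B² n dl = |T| B̄ ∇B` holds, where `B̄ = (1/|T|) ∫_T B dA` and `∇B = g`. -/
theorem stmt9 (P1 P2 P3 : ℝ × ℝ) (a : ℝ) (g : ℝ × ℝ)
    (B : ℝ × ℝ → ℝ) (hB : ∀ x, B x = a + g.1 * x.1 + g.2 * x.2)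
    (A : ℝ)
    (hA : A = (1 / 2) * ((P2.1 - P1.1) * (P3.2 - P1.2) - (P3.1 - P1.1) * (P2.2 - P1.2)))
    (hApos : 0 < A)
    (Bbar : ℝ)
    (hBbar : Bbar = (1 / A) * ∫ x in convexHull ℝ ({P1, P2, P3} : Set (ℝ × ℝ)), B x) :
    edgeInt9 B P1 P2 + edgeInt9 B P2 P3 + edgeInt9 B P3 P1 = (A * Bbar) • g := by
  have hT := triangle_integral P1 P2 P3 a g B hB A hA hApos
  have hA0 : A ≠ 0 := ne_of_gt hApos
  have hABbar : A * Bbar = A * (B P1 + B P2 + B P3) / 3 := by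
    rw [hBbar, hT]
    field_simp
  rw [edge_eval9 a g B hB P1 P2, edge_eval9 a g B hB P2 P3, edge_eval9 a g B hB P3 P1, hABbar]
  have b1 := hB P1
  have b2 := hB P2
  have b3 := hB P3
  rw [b1, b2, b3, hA]
  refine Prod.ext ?_ ?_ <;>
    simp only [Prod.fst_add, Prod.snd_add, Prod.smul_fst, Prod.smul_snd, smul_eq_mul] <;>
    ring
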